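/- Let U take values in {1,…,ℓ} with P_U(i)=ψᵢ/θ for positive integers ψᵢ with Σψᵢ=θ. Define A' with P(A'=j|U=i)=1/ψᵢ for 1≤j≤ψᵢ, A = Σ_{i<U} ψᵢ + A' − 1, R uniform on {0,…,θ−1} independent of (U,A'), and X = (A+R) mod θ. Then (R,U,X) satisfies I(U;X)=0, H(U|RX)=0, I(U;R)=0, and moreover I(R;U,X) = Σᵢ P_U(i) log(θ/ψᵢ). -/

import Mathlib

open Finset

/-- Shannon entropy of a finitely supported probability mass function. -/
noncomputable def ent {α : Type*} [Fintype α] (q : α → ℝ) : ℝ :=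
  ∑ a, Real.negMulLog (q a)

/-- `offsetPsi ψ u = Σ_{j < u} ψ j`, the offset used by the partition code. -/
def offsetPsi {ℓ : ℕ} (ψ : Fin ℓ → ℕ) (u : Fin ℓ) : ℕ :=
  ∑ j ∈ Finset.univ.filter (fun j => j < u), ψ j

section aux
set_option linter.unusedSectionVars false
variable {ℓ θ : ℕ} [NeZero θ] {ψ : Fin ℓ → ℕ}
open scoped Classical

lemma offset_eq_insert (u : Fin ℓ) :
    offsetPsi ψ u + ψ u = ∑ j ∈ insert u (univ.filter (fun j => j < u)), ψ j := by
  rw [Finset.sum_insert (by simp)]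
  simp [offsetPsi, add_comm]

lemma offset_add_le (hθ : ∑ i, ψ i = θ) (u : Fin ℓ) :
    offsetPsi ψ u + ψ u ≤ θ := by
  rw [offset_eq_insert, ← hθ]
  exact Finset.sum_le_sum_of_subset (Finset.subset_univ _)

lemma offset_mono {u v : Fin ℓ} (h : u < v) :
    offsetPsi ψ u + ψ u ≤ offsetPsi ψ v := by
  rw [offset_eq_insert]
  apply Finset.sum_le_sum_of_subset
  intro j hj
  simp only [Finset.mem_insert, Finset.mem_filter, Finset.mem_univ, true_and] at hj ⊢
  rcases hj with rfl | hj
  · exact h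
  · exact lt_trans hj h

lemma good_iff (hθ : ∑ i, ψ i = θ) (u : Fin ℓ) (d : ZMod θ) :
    (∃ a : ℕ, a < ψ u ∧ d = ((offsetPsi ψ u + a : ℕ) : ZMod θ)) ↔
    (offsetPsi ψ u ≤ d.val ∧ d.val < offsetPsi ψ u + ψ u) := by
  constructor
  · rintro ⟨a, ha, rfl⟩
    have hlt : offsetPsi ψ u + a < θ := lt_of_lt_of_le (by omega) (offset_add_le hθ u)
    rw [ZMod.val_cast_of_lt hlt]
    omega
  · rintro ⟨h1, h2⟩
    refine ⟨d.val - offsetPsi ψ u, by omega, ?_⟩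
    have : offsetPsi ψ u + (d.val - offsetPsi ψ u) = d.val := by omega
    rw [this, ZMod.natCast_rightInverse d]

lemma exists_unique_good (hψ : ∀ i, 0 < ψ i) (hθ : ∑ i, ψ i = θ) (d : ZMod θ) :
    ∃! u : Fin ℓ, offsetPsi ψ u ≤ d.val ∧ d.val < offsetPsi ψ u + ψ u := by
  have hθ0 : 0 < θ := Nat.pos_of_ne_zero (NeZero.ne θ)
  have hℓ : 0 < ℓ := by
    by_contra h
    have : ℓ = 0 := by omega
    subst this
    simp at hθ
    omega
  have hd : d.val < θ := ZMod.val_lt d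
  have huniq : ∀ u v : Fin ℓ,
      (offsetPsi ψ u ≤ d.val ∧ d.val < offsetPsi ψ u + ψ u) →
      (offsetPsi ψ v ≤ d.val ∧ d.val < offsetPsi ψ v + ψ v) → u = v := by
    intro u v hu hv
    rcases lt_trichotomy u v with h | h | h
    · have := offset_mono (ψ := ψ) h; omega
    · exact h
    · have := offset_mono (ψ := ψ) h; omega
  set S : Finset (Fin ℓ) := univ.filter (fun u => offsetPsi ψ u ≤ d.val) with hS
  have hne : S.Nonempty := by
    refine ⟨⟨0, hℓ⟩, ?_⟩
    simp only [hS, Finset.mem_filter, Finset.mem_univ, true_and]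
    have : offsetPsi ψ ⟨0, hℓ⟩ = 0 := by
      apply Finset.sum_eq_zero
      intro j hj
      simp only [Finset.mem_filter, Finset.mem_univ, true_and, Fin.lt_def] at hj
      omega
    omega
  set u := S.max' hne with hu
  have humem : offsetPsi ψ u ≤ d.val := by
    have := S.max'_mem hne
    simp only [hS, Finset.mem_filter, Finset.mem_univ, true_and] at this
    exact this
  have hub : d.val < offsetPsi ψ u + ψ u := by
    by_contra hcon
    push_neg at hcon
    rcases Nat.lt_or_ge (u.val + 1) ℓ with hv | hv
    · set v : Fin ℓ := ⟨u.val + 1, hv⟩ with hvdef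
      have huv : u < v := Fin.lt_def.mpr (Nat.lt_succ_self u.val)
      have hov : offsetPsi ψ u + ψ u = offsetPsi ψ v := by
        rw [offset_eq_insert]
        apply Finset.sum_congr ?_ (fun _ _ => rfl)
        ext j
        simp only [Finset.mem_insert, Finset.mem_filter, Finset.mem_univ, true_and,
          Fin.lt_def]
        constructor
        · rintro (rfl | h) <;> omega
        · intro h
          rcases Nat.lt_or_ge j.val u.val with h' | h'
          · exact Or.inr h'
          · left; apply Fin.ext
            have h2 : (⟨u.val + 1, hv⟩ : Fin ℓ).val = u.val + 1 := rfl
            omega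
      have hvS : v ∈ S := by
        simp only [hS, Finset.mem_filter, Finset.mem_univ, true_and]
        omega
      have := S.le_max' v hvS
      exact absurd (lt_of_lt_of_le huv this) (lt_irrefl u)
    · have : offsetPsi ψ u + ψ u = θ := by
        rw [offset_eq_insert, ← hθ]
        apply Finset.sum_congr ?_ (fun _ _ => rfl)
        ext j
        simp only [Finset.mem_insert, Finset.mem_filter, Finset.mem_univ, true_and,
          Fin.lt_def, iff_true]
        have hj := j.isLt
        rcases Nat.lt_or_ge j.val u.val with h' | h'
        · exact Or.inr h'
        · left; apply Fin.ext; omega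
      omega
  exact ⟨u, ⟨humem, hub⟩, fun v hv => huniq v u hv ⟨humem, hub⟩⟩

lemma card_good (hθ : ∑ i, ψ i = θ) (u : Fin ℓ) :
    (univ.filter (fun d : ZMod θ =>
      offsetPsi ψ u ≤ d.val ∧ d.val < offsetPsi ψ u + ψ u)).card = ψ u := by
  have key : (Finset.range (ψ u)).card = (univ.filter (fun d : ZMod θ =>
      offsetPsi ψ u ≤ d.val ∧ d.val < offsetPsi ψ u + ψ u)).card := by
    apply Finset.card_bij (fun a _ => ((offsetPsi ψ u + a : ℕ) : ZMod θ))
    · intro a ha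
      simp only [Finset.mem_range] at ha
      have hlt : offsetPsi ψ u + a < θ := lt_of_lt_of_le (by omega) (offset_add_le hθ u)
      simp only [Finset.mem_filter, Finset.mem_univ, true_and, ZMod.val_cast_of_lt hlt]
      omega
    · intro a ha b hb hab
      simp only [Finset.mem_range] at ha hb
      have ha' : offsetPsi ψ u + a < θ := lt_of_lt_of_le (by omega) (offset_add_le hθ u)
      have hb' : offsetPsi ψ u + b < θ := lt_of_lt_of_le (by omega) (offset_add_le hθ u)
      have := congrArg ZMod.val hab
      rw [ZMod.val_cast_of_lt ha', ZMod.val_cast_of_lt hb'] at this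
      omega
    · intro d hd
      simp only [Finset.mem_filter, Finset.mem_univ, true_and] at hd
      refine ⟨d.val - offsetPsi ψ u, Finset.mem_range.mpr (by omega), ?_⟩
      have : offsetPsi ψ u + (d.val - offsetPsi ψ u) = d.val := by omega
      rw [this, ZMod.natCast_rightInverse d]
  rw [← key, Finset.card_range]

lemma sum_ite_good (hθ : ∑ i, ψ i = θ) (u : Fin ℓ) (c : ℝ) :
    ∑ d : ZMod θ, (if offsetPsi ψ u ≤ d.val ∧ d.val < offsetPsi ψ u + ψ u then c else 0)
      = (ψ u : ℝ) * c := by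
  rw [← Finset.sum_filter, Finset.sum_const, card_good hθ u, nsmul_eq_mul]

end aux

open scoped Classical in
/-- The partition code: `U` has `P_U(i) = ψᵢ/θ`, `A'` is uniform on
`{1,…,ψ_U}` given `U`, `A = Σ_{i<U} ψᵢ + A' − 1`, `R` is uniform on `ZMod θ`
independent of `(U,A')` and `X = A + R`.  The induced joint distribution `p`
of `(U,R,X)` forms an error-free perfect secrecy system and
`I(R;U,X) = Σᵢ P_U(i) log(θ/ψᵢ)`. -/
theorem stmt_12 (ℓ θ : ℕ) [NeZero θ] (ψ : Fin ℓ → ℕ)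
    (hψ : ∀ i, 0 < ψ i) (hθ : ∑ i, ψ i = θ)
    (p : Fin ℓ → ZMod θ → ZMod θ → ℝ)
    -- joint distribution of `(U, R, X)` induced by the partition code
    (hp : ∀ u r x, p u r x =
      if ∃ a : ℕ, a < ψ u ∧ (x - r : ZMod θ) = ((offsetPsi ψ u + a : ℕ) : ZMod θ)
      then ((ψ u : ℝ) / θ) / ((ψ u : ℝ) * θ) else 0) :
    -- `I(U;X) = 0`
    (∀ u x, (∑ r, p u r x)
      = (∑ r, ∑ x', p u r x') * (∑ u', ∑ r, p u' r x))
    -- `I(U;R) = 0`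
    ∧ (∀ u r, (∑ x, p u r x)
      = (∑ r', ∑ x, p u r' x) * (∑ u', ∑ x, p u' r x))
    -- `H(U|RX) = 0`
    ∧ (∃ g : ZMod θ → ZMod θ → Fin ℓ, ∀ u r x, p u r x ≠ 0 → u = g r x)
    -- `I(R;U,X) = Σᵢ P_U(i) log(θ/ψᵢ)`
    ∧ (ent (fun r : ZMod θ => ∑ u, ∑ x, p u r x)
        + ent (fun t : Fin ℓ × ZMod θ => ∑ r, p t.1 r t.2)
        - ent (fun t : Fin ℓ × ZMod θ × ZMod θ => p t.1 t.2.1 t.2.2)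
      = ∑ i, ((ψ i : ℝ) / θ) * Real.log ((θ : ℝ) / (ψ i : ℝ))) := by
  have hθ0 : 0 < θ := Nat.pos_of_ne_zero (NeZero.ne θ)
  have hT : (0 : ℝ) < (θ : ℝ) := by exact_mod_cast hθ0
  have hTne : (θ : ℝ) ≠ 0 := ne_of_gt hT
  have hψR : ∀ u, (0 : ℝ) < (ψ u : ℝ) := fun u => by exact_mod_cast hψ u
  set c : ℝ := 1 / ((θ : ℝ) * θ) with hc
  -- rewrite p using the interval condition
  have hp' : ∀ u r x, p u r x =
      if offsetPsi ψ u ≤ (x - r : ZMod θ).val ∧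
         (x - r : ZMod θ).val < offsetPsi ψ u + ψ u then c else 0 := by
    intro u r x
    rw [hp u r x]
    have hval : ((ψ u : ℝ) / θ) / ((ψ u : ℝ) * θ) = c := by
      rw [hc, div_div, div_eq_div_iff (mul_pos hT (mul_pos (hψR u) hT)).ne'
        (mul_pos hT hT).ne']
      ring
    rw [hval]
    exact if_congr (good_iff hθ u (x - r)) rfl rfl
  have hcard : Fintype.card (ZMod θ) = θ := ZMod.card θ
  -- sums over r and over x
  have sumR : ∀ u x, ∑ r, p u r x = (ψ u : ℝ) * c := by
    intro u x
    simp only [hp']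
    rw [Fintype.sum_equiv (Equiv.subLeft x)
      (fun r : ZMod θ => if offsetPsi ψ u ≤ (x - r : ZMod θ).val ∧
        (x - r : ZMod θ).val < offsetPsi ψ u + ψ u then c else 0)
      (fun d : ZMod θ => if offsetPsi ψ u ≤ d.val ∧
        d.val < offsetPsi ψ u + ψ u then c else 0)
      (fun r => rfl)]
    exact sum_ite_good hθ u c
  have sumX : ∀ u r, ∑ x, p u r x = (ψ u : ℝ) * c := by
    intro u r
    simp only [hp']
    rw [Fintype.sum_equiv (Equiv.subRight r)
      (fun x : ZMod θ => if offsetPsi ψ u ≤ (x - r : ZMod θ).val ∧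
        (x - r : ZMod θ).val < offsetPsi ψ u + ψ u then c else 0)
      (fun d : ZMod θ => if offsetPsi ψ u ≤ d.val ∧
        d.val < offsetPsi ψ u + ψ u then c else 0)
      (fun x => rfl)]
    exact sum_ite_good hθ u c
  have hsumψ : (∑ i, (ψ i : ℝ)) = (θ : ℝ) := by
    rw [← hθ]; push_cast; rfl
  -- marginals
  have mU : ∀ u, (∑ r, ∑ x', p u r x') = (θ : ℝ) * ((ψ u : ℝ) * c) := by
    intro u
    simp only [sumX]
    rw [Finset.sum_const, Finset.card_univ, hcard, nsmul_eq_mul]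
  have mX : ∀ x, (∑ u', ∑ r, p u' r x) = 1 / (θ : ℝ) := by
    intro x
    simp only [sumR]
    rw [← Finset.sum_mul, hsumψ, hc]
    field_simp
  have mR : ∀ r, (∑ u, ∑ x, p u r x) = 1 / (θ : ℝ) := by
    intro r
    simp only [sumX]
    rw [← Finset.sum_mul, hsumψ, hc]
    field_simp
  refine ⟨?_, ?_, ?_, ?_⟩
  · intro u x
    rw [sumR, mU, mX, hc]
    have hψne : (ψ u : ℝ) ≠ 0 := ne_of_gt (hψR u)
    field_simp
    try ring
  · intro u r
    rw [sumX, mU u]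
    have : (∑ u', ∑ x, p u' r x) = 1 / (θ : ℝ) := by
      simp only [sumX]
      rw [← Finset.sum_mul, hsumψ, hc]
      field_simp
    rw [this, hc]
    have hψne : (ψ u : ℝ) ≠ 0 := ne_of_gt (hψR u)
    field_simp
    try ring
  · refine ⟨fun r x => (exists_unique_good hψ hθ (x - r)).choose, ?_⟩
    intro u r x hne
    rw [hp' u r x] at hne
    have hgood : offsetPsi ψ u ≤ (x - r : ZMod θ).val ∧
        (x - r : ZMod θ).val < offsetPsi ψ u + ψ u := by
      by_contra h
      rw [if_neg h] at hne
      exact hne rfl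
    exact ((exists_unique_good hψ hθ (x - r)).choose_spec.2 u hgood).symm ▸ rfl
  · -- entropy identity
    have e1 : ent (fun r : ZMod θ => ∑ u, ∑ x, p u r x)
        = (θ : ℝ) * Real.negMulLog (1 / (θ : ℝ)) := by
      unfold ent
      simp only [mR]
      rw [Finset.sum_const, Finset.card_univ, hcard, nsmul_eq_mul]
    have e2 : ent (fun t : Fin ℓ × ZMod θ => ∑ r, p t.1 r t.2)
        = ∑ u, (θ : ℝ) * Real.negMulLog ((ψ u : ℝ) * c) := by
      unfold ent
      rw [Fintype.sum_prod_type]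
      refine Finset.sum_congr rfl fun u _ => ?_
      simp only [sumR]
      rw [Finset.sum_const, Finset.card_univ, hcard, nsmul_eq_mul]
    have e3 : ent (fun t : Fin ℓ × ZMod θ × ZMod θ => p t.1 t.2.1 t.2.2)
        = ∑ u, (θ : ℝ) * ((ψ u : ℝ) * Real.negMulLog c) := by
      unfold ent
      rw [Fintype.sum_prod_type]
      refine Finset.sum_congr rfl fun u _ => ?_
      rw [Fintype.sum_prod_type]
      have inner : ∀ r : ZMod θ, (∑ x, Real.negMulLog (p u r x))
          = (ψ u : ℝ) * Real.negMulLog c := by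
        intro r
        have : ∀ x : ZMod θ, Real.negMulLog (p u r x) =
            if offsetPsi ψ u ≤ (x - r : ZMod θ).val ∧
               (x - r : ZMod θ).val < offsetPsi ψ u + ψ u
            then Real.negMulLog c else 0 := by
          intro x
          rw [hp' u r x]
          split
          · rfl
          · exact Real.negMulLog_zero
        simp only [this]
        rw [Fintype.sum_equiv (Equiv.subRight r)
          (fun x : ZMod θ => if offsetPsi ψ u ≤ (x - r : ZMod θ).val ∧
            (x - r : ZMod θ).val < offsetPsi ψ u + ψ u then Real.negMulLog c else 0)
          (fun d : ZMod θ => if offsetPsi ψ u ≤ d.val ∧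
            d.val < offsetPsi ψ u + ψ u then Real.negMulLog c else 0)
          (fun x => rfl)]
        exact sum_ite_good hθ u _
      simp only [inner]
      rw [Finset.sum_const, Finset.card_univ, hcard, nsmul_eq_mul]
      try ring
    rw [e1, e2, e3]
    have hlog : (θ : ℝ) * Real.negMulLog (1 / (θ : ℝ))
        = ∑ u, ((ψ u : ℝ) / θ) * Real.log (θ : ℝ) := by
      rw [← Finset.sum_mul, ← Finset.sum_div, hsumψ, div_self hTne, one_mul,
        Real.negMulLog, one_div, Real.log_inv]
      field_simp
    rw [hlog, ← Finset.sum_add_distrib, ← Finset.sum_sub_distrib]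
    refine Finset.sum_congr rfl fun u _ => ?_
    have hψne : (ψ u : ℝ) ≠ 0 := ne_of_gt (hψR u)
    rw [hc, Real.negMulLog, Real.negMulLog, one_div, Real.log_inv,
      Real.log_mul hψne (by positivity), Real.log_inv, Real.log_mul hTne hTne,
      Real.log_div hTne hψne]
    field_simp
    ring
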